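/- arXiv:2203.10081 — 5 statements merged into one kernel-verified Lean document; each statement's English description precedes it below -/
import Mathlib

section
/- On the unit circle S¹, with a(θ) = 1 + β cos(2θ) for fixed β ∈ (-1,1), the coordinate functions x₁ = cos θ and x₂ = sin θ satisfy ∫₀^{2π} a(θ)|x_i'(θ)|² dθ ≤ C ∫₀^{2π} a(θ)|x_i(θ)|² dθ for at least one i ∈ {1,2} with C = 1. More generally: for any positive continuous function a on S^{n-2} with ∫_{S^{n-2}} a(ξ) ξ_i dσ = 0 for all i, there exists i ∈ {1, ..., n-1} such that ∫_{S^{n-2}} a |∇_{S^{n-2}} x_i|² dσ ≤ (n-2) ∫_{S^{n-2}} a x_i² dσ. -/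
open MeasureTheory

/-- For a positive continuous weight `a` on the unit sphere `S^{n-2} ⊂ ℝ^{n-1}` whose
weighted coordinate averages vanish, there exists a coordinate function `x_i` with
`∫ a |∇_{S^{n-2}} x_i|² ≤ (n-2) ∫ a x_i²`.  Here we use the identity
`|∇_{S^{n-2}} x_i|²(ξ) = 1 - ξ_i²` for the tangential gradient of the coordinate
function on the unit sphere, and `volume.toSphere` is the surface measure. -/
theorem stmt3 (n : ℕ) (hn : 3 ≤ n)
    (a : EuclideanSpace ℝ (Fin (n - 1)) → ℝ) (ha : Continuous a) (hpos : ∀ ξ, 0 < a ξ)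
    (horth : ∀ i : Fin (n - 1),
      (∫ ξ : Metric.sphere (0 : EuclideanSpace ℝ (Fin (n - 1))) 1,
        a ξ * (ξ : EuclideanSpace ℝ (Fin (n - 1))) i
        ∂((volume : Measure (EuclideanSpace ℝ (Fin (n - 1)))).toSphere)) = 0) :
    ∃ i : Fin (n - 1),
      (∫ ξ : Metric.sphere (0 : EuclideanSpace ℝ (Fin (n - 1))) 1,
        a ξ * (1 - ((ξ : EuclideanSpace ℝ (Fin (n - 1))) i) ^ 2)
        ∂((volume : Measure (EuclideanSpace ℝ (Fin (n - 1)))).toSphere))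
      ≤ ((n : ℝ) - 2) *
        ∫ ξ : Metric.sphere (0 : EuclideanSpace ℝ (Fin (n - 1))) 1,
          a ξ * ((ξ : EuclideanSpace ℝ (Fin (n - 1))) i) ^ 2
          ∂((volume : Measure (EuclideanSpace ℝ (Fin (n - 1)))).toSphere) := by
  haveI hne : Nonempty (Fin (n - 1)) := ⟨⟨0, by omega⟩⟩
  set μ := ((volume : Measure (EuclideanSpace ℝ (Fin (n - 1)))).toSphere) with hμ
  haveI : IsFiniteMeasureOnCompacts μ := ⟨fun _K _ => measure_lt_top μ _⟩
  have hcont : ∀ i : Fin (n - 1),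
      Continuous (fun ξ : Metric.sphere (0 : EuclideanSpace ℝ (Fin (n - 1))) 1 =>
        a ξ * ((ξ : EuclideanSpace ℝ (Fin (n - 1))) i) ^ 2) := by
    intro i
    exact (ha.comp continuous_subtype_val).mul
      (((PiLp.continuous_apply 2 _ i).comp continuous_subtype_val).pow 2)
  have hint : ∀ i : Fin (n - 1),
      Integrable (fun ξ : Metric.sphere (0 : EuclideanSpace ℝ (Fin (n - 1))) 1 =>
        a ξ * ((ξ : EuclideanSpace ℝ (Fin (n - 1))) i) ^ 2) μ := fun i =>
    ((hcont i).integrable_of_hasCompactSupport (HasCompactSupport.of_compactSpace _))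
  have hconta : Continuous (fun ξ : Metric.sphere (0 : EuclideanSpace ℝ (Fin (n - 1))) 1 =>
      a ξ) := ha.comp continuous_subtype_val
  have hinta : Integrable (fun ξ : Metric.sphere (0 : EuclideanSpace ℝ (Fin (n - 1))) 1 =>
      a ξ) μ :=
    hconta.integrable_of_hasCompactSupport (HasCompactSupport.of_compactSpace _)
  have hsq : ∀ ξ : Metric.sphere (0 : EuclideanSpace ℝ (Fin (n - 1))) 1,
      ∑ i : Fin (n - 1), ((ξ : EuclideanSpace ℝ (Fin (n - 1))) i) ^ 2 = 1 := by
    intro ξ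
    have h1 : ‖(ξ : EuclideanSpace ℝ (Fin (n - 1)))‖ = 1 := by
      have := ξ.2
      simpa [dist_eq_norm] using this
    have h2 := EuclideanSpace.norm_eq (ξ : EuclideanSpace ℝ (Fin (n - 1)))
    rw [h1] at h2
    have hnn : 0 ≤ ∑ i, ‖(ξ : EuclideanSpace ℝ (Fin (n - 1))) i‖ ^ 2 :=
      Finset.sum_nonneg fun i _ => sq_nonneg _
    have h3 : (∑ i, ‖(ξ : EuclideanSpace ℝ (Fin (n - 1))) i‖ ^ 2) = 1 := by
      nlinarith [Real.sq_sqrt hnn, h2.symm]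
    simpa [Real.norm_eq_abs, sq_abs] using h3
  have hsum : ∑ i : Fin (n - 1),
      (∫ ξ : Metric.sphere (0 : EuclideanSpace ℝ (Fin (n - 1))) 1,
        a ξ * ((ξ : EuclideanSpace ℝ (Fin (n - 1))) i) ^ 2 ∂μ)
      = ∫ ξ : Metric.sphere (0 : EuclideanSpace ℝ (Fin (n - 1))) 1, a ξ ∂μ := by
    rw [← integral_finset_sum _ fun i _ => hint i]
    congr 1
    ext ξ
    rw [← Finset.mul_sum, hsq ξ, mul_one]
  have hLHS : ∀ i : Fin (n - 1),
      (∫ ξ : Metric.sphere (0 : EuclideanSpace ℝ (Fin (n - 1))) 1,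
        a ξ * (1 - ((ξ : EuclideanSpace ℝ (Fin (n - 1))) i) ^ 2) ∂μ)
      = (∫ ξ : Metric.sphere (0 : EuclideanSpace ℝ (Fin (n - 1))) 1, a ξ ∂μ)
        - ∫ ξ : Metric.sphere (0 : EuclideanSpace ℝ (Fin (n - 1))) 1,
            a ξ * ((ξ : EuclideanSpace ℝ (Fin (n - 1))) i) ^ 2 ∂μ := by
    intro i
    rw [← integral_sub hinta (hint i)]
    congr 1
    ext ξ
    ring
  have hcast : ((n - 1 : ℕ) : ℝ) = (n : ℝ) - 1 := by
    have h1 : 1 ≤ n := by omega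
    push_cast [h1]
    ring
  have hsumle : ∑ i : Fin (n - 1),
      (∫ ξ : Metric.sphere (0 : EuclideanSpace ℝ (Fin (n - 1))) 1,
        a ξ * (1 - ((ξ : EuclideanSpace ℝ (Fin (n - 1))) i) ^ 2) ∂μ)
      ≤ ∑ i : Fin (n - 1), ((n : ℝ) - 2) *
          ∫ ξ : Metric.sphere (0 : EuclideanSpace ℝ (Fin (n - 1))) 1,
            a ξ * ((ξ : EuclideanSpace ℝ (Fin (n - 1))) i) ^ 2 ∂μ := by
    have h1 : ∑ i : Fin (n - 1),
        (∫ ξ : Metric.sphere (0 : EuclideanSpace ℝ (Fin (n - 1))) 1,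
          a ξ * (1 - ((ξ : EuclideanSpace ℝ (Fin (n - 1))) i) ^ 2) ∂μ)
        = ((n : ℝ) - 2) *
          ∫ ξ : Metric.sphere (0 : EuclideanSpace ℝ (Fin (n - 1))) 1, a ξ ∂μ := by
      simp only [hLHS]
      rw [Finset.sum_sub_distrib, hsum, Finset.sum_const, Finset.card_univ,
        Fintype.card_fin, nsmul_eq_mul, hcast]
      ring
    have h2 : ∑ i : Fin (n - 1), ((n : ℝ) - 2) *
        (∫ ξ : Metric.sphere (0 : EuclideanSpace ℝ (Fin (n - 1))) 1,
          a ξ * ((ξ : EuclideanSpace ℝ (Fin (n - 1))) i) ^ 2 ∂μ)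
        = ((n : ℝ) - 2) *
          ∫ ξ : Metric.sphere (0 : EuclideanSpace ℝ (Fin (n - 1))) 1, a ξ ∂μ := by
      rw [← Finset.mul_sum, hsum]
    rw [h1, h2]
  obtain ⟨i, _, hi⟩ := Finset.exists_le_of_sum_le Finset.univ_nonempty hsumle
  exact ⟨i, hi⟩
end

section
/- Let β ∈ (-1, 1] and let μ₁(β) be the first eigenvalue of the Dirichlet problem [(1 + β cos(2θ)) u'(θ)]' = -μ (1 + β cos(2θ)) u(θ) on (0, π) with u(0) = u(π) = 0, characterized by the Rayleigh quotient μ₁(β) = inf_{0 ≠ u ∈ H¹₀((0,π))} ∫₀^π (1 + β cos 2θ)|u'|² dθ / ∫₀^π (1 + β cos 2θ)|u|² dθ. Then μ₁(β) ≤ (2 + β)/(2 - β). -/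
open MeasureTheory intervalIntegral Real

lemma intsin (β : ℝ) : (∫ θ in (0:ℝ)..π, (1 + β * cos (2*θ)) * sin θ ^ 2) = π * (2 - β) / 4 := by
  have h : ∀ x ∈ Set.uIcc (0:ℝ) π, HasDerivAt
      (fun θ : ℝ => θ/2 - sin (2*θ)/4 + β*(sin (2*θ)/4 - θ/4 - sin (4*θ)/16))
      ((1 + β * cos (2*x)) * sin x ^ 2) x := by
    intro x _
    have h1 : HasDerivAt (fun θ : ℝ => θ/2 - sin (2*θ)/4 + β*(sin (2*θ)/4 - θ/4 - sin (4*θ)/16))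
        (1/2 - (cos (2*x)*2)/4 + β*((cos (2*x)*2)/4 - 1/4 - (cos (4*x)*4)/16)) x := by
      have s2 : HasDerivAt (fun θ : ℝ => sin (2*θ)) (cos (2*x)*2) x := by
        simpa [Function.comp_def] using (Real.hasDerivAt_sin (2*x)).comp x ((hasDerivAt_id x).const_mul 2)
      have s4 : HasDerivAt (fun θ : ℝ => sin (4*θ)) (cos (4*x)*4) x := by
        simpa [Function.comp_def] using (Real.hasDerivAt_sin (4*x)).comp x ((hasDerivAt_id x).const_mul 4)
      exact (((hasDerivAt_id x).div_const 2).sub (s2.div_const 4)).add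
        (((((s2.div_const 4).sub ((hasDerivAt_id x).div_const 4)).sub (s4.div_const 16))).const_mul β)
    convert h1 using 1
    have c2 : cos (2*x) = 1 - 2 * sin x ^ 2 := by
      rw [Real.cos_two_mul]; linarith [Real.sin_sq_add_cos_sq x]
    have c4 : cos (4*x) = 1 - 2 * sin (2*x) ^ 2 := by
      rw [show (4:ℝ)*x = 2*(2*x) by ring, Real.cos_two_mul]
      linarith [Real.sin_sq_add_cos_sq (2*x)]
    have s2 : sin (2*x) = 2 * sin x * cos x := Real.sin_two_mul x
    rw [c2, c4, s2]
    linear_combination (-2*β*sin x^2) * (Real.sin_sq_add_cos_sq x)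
  rw [intervalIntegral.integral_eq_sub_of_hasDerivAt h]
  · rw [show (4:ℝ)*π = 2*(2*π) by ring]
    simp [Real.sin_two_pi, Real.sin_two_mul]
    ring
  · apply Continuous.intervalIntegrable; continuity

lemma intcos (β : ℝ) : (∫ θ in (0:ℝ)..π, (1 + β * cos (2*θ)) * cos θ ^ 2) = π * (2 + β) / 4 := by
  have h : ∀ x ∈ Set.uIcc (0:ℝ) π, HasDerivAt
      (fun θ : ℝ => θ/2 + sin (2*θ)/4 + β*(sin (2*θ)/4 + θ/4 + sin (4*θ)/16))
      ((1 + β * cos (2*x)) * cos x ^ 2) x := by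
    intro x _
    have h1 : HasDerivAt (fun θ : ℝ => θ/2 + sin (2*θ)/4 + β*(sin (2*θ)/4 + θ/4 + sin (4*θ)/16))
        (1/2 + (cos (2*x)*2)/4 + β*((cos (2*x)*2)/4 + 1/4 + (cos (4*x)*4)/16)) x := by
      have s2 : HasDerivAt (fun θ : ℝ => sin (2*θ)) (cos (2*x)*2) x := by
        simpa [Function.comp_def] using (Real.hasDerivAt_sin (2*x)).comp x ((hasDerivAt_id x).const_mul 2)
      have s4 : HasDerivAt (fun θ : ℝ => sin (4*θ)) (cos (4*x)*4) x := by
        simpa [Function.comp_def] using (Real.hasDerivAt_sin (4*x)).comp x ((hasDerivAt_id x).const_mul 4)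
      exact (((hasDerivAt_id x).div_const 2).add (s2.div_const 4)).add
        (((((s2.div_const 4).add ((hasDerivAt_id x).div_const 4)).add (s4.div_const 16))).const_mul β)
    convert h1 using 1
    have c2 : cos (2*x) = 2 * cos x ^ 2 - 1 := Real.cos_two_mul x
    have c4 : cos (4*x) = 1 - 2 * sin (2*x) ^ 2 := by
      rw [show (4:ℝ)*x = 2*(2*x) by ring, Real.cos_two_mul]
      linarith [Real.sin_sq_add_cos_sq (2*x)]
    have s2 : sin (2*x) = 2 * sin x * cos x := Real.sin_two_mul x
    rw [c2, c4, s2]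
    linear_combination (2*β*cos x^2) * (Real.sin_sq_add_cos_sq x)
  rw [intervalIntegral.integral_eq_sub_of_hasDerivAt h]
  · rw [show (4:ℝ)*π = 2*(2*π) by ring]
    simp [Real.sin_two_pi, Real.sin_two_mul]
    ring
  · apply Continuous.intervalIntegrable; continuity

/-- The first Dirichlet eigenvalue `μ₁(β)` of `[(1+β cos 2θ)u']' = -μ(1+β cos 2θ)u` on `(0,π)`,
given by the Rayleigh quotient over nonzero functions vanishing at the endpoints, satisfies
`μ₁(β) ≤ (2+β)/(2-β)` for β ∈ (-1, 1]. -/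
theorem stmt6 (β : ℝ) (hβ : β ∈ Set.Ioc (-1 : ℝ) 1) :
    sInf {q : ℝ | ∃ u : ℝ → ℝ, ContDiff ℝ 1 u ∧ u 0 = 0 ∧ u Real.pi = 0 ∧
      (∫ θ in (0 : ℝ)..Real.pi, (1 + β * Real.cos (2 * θ)) * u θ ^ 2) ≠ 0 ∧
      q = (∫ θ in (0 : ℝ)..Real.pi, (1 + β * Real.cos (2 * θ)) * deriv u θ ^ 2) /
          (∫ θ in (0 : ℝ)..Real.pi, (1 + β * Real.cos (2 * θ)) * u θ ^ 2)}
      ≤ (2 + β) / (2 - β) := by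
  obtain ⟨hβ1, hβ2⟩ := hβ
  have hw : ∀ θ : ℝ, 0 ≤ 1 + β * Real.cos (2 * θ) := fun θ => by
    nlinarith [Real.neg_one_le_cos (2*θ), Real.cos_le_one (2*θ)]
  apply csInf_le
  · refine ⟨0, fun q hq => ?_⟩
    obtain ⟨u, _, _, _, hne, hq⟩ := hq
    have hnum : 0 ≤ ∫ θ in (0:ℝ)..π, (1 + β * Real.cos (2 * θ)) * deriv u θ ^ 2 :=
      intervalIntegral.integral_nonneg Real.pi_pos.le
        (fun θ _ => mul_nonneg (hw θ) (sq_nonneg _))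
    have hden : 0 ≤ ∫ θ in (0:ℝ)..π, (1 + β * Real.cos (2 * θ)) * u θ ^ 2 :=
      intervalIntegral.integral_nonneg Real.pi_pos.le
        (fun θ _ => mul_nonneg (hw θ) (sq_nonneg _))
    rw [hq]
    exact div_nonneg hnum hden
  · refine ⟨Real.sin, Real.contDiff_sin, Real.sin_zero, Real.sin_pi, ?_, ?_⟩
    · rw [intsin]
      have h2 : (0:ℝ) < 2 - β := by linarith
      positivity
    · rw [Real.deriv_sin, intcos, intsin]
      have h2 : (0:ℝ) < 2 - β := by linarith
      have hπ := Real.pi_pos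
      field_simp
end

section
/- Let β ∈ (-1, -1/2) and set ε = 1 + β. Define u: [0, π] → ℝ by u(θ) = ε^{-1/2} θ for θ ∈ [0, √ε], u(θ) = 1 for θ ∈ (√ε, π - √ε), u(θ) = ε^{-1/2}(π - θ) for θ ∈ [π - √ε, π]. Then there is an absolute constant C such that ∫₀^π (1 + β cos 2θ)|u'(θ)|² dθ ≤ C √ε while ∫₀^π (1 + β cos 2θ)|u(θ)|² dθ ≥ 1/C; consequently the Rayleigh quotient of u is at most C² √(1+β). -/
open intervalIntegral
open Real

lemma myIntegrable {f : ℝ → ℝ} (hf : Measurable f) {M : ℝ} {a b : ℝ}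
    (h : ∀ x ∈ Set.uIoc a b, |f x| ≤ M) :
    IntervalIntegrable f MeasureTheory.volume a b := by
  rw [intervalIntegrable_iff]
  refine MeasureTheory.Integrable.mono' (g := fun _ => M) ?_ hf.aestronglyMeasurable ?_
  · refine MeasureTheory.integrableOn_const ?_
    rw [Set.uIoc, Real.volume_Ioc]
    exact ENNReal.ofReal_ne_top
  · rw [MeasureTheory.ae_restrict_iff' measurableSet_uIoc]
    exact MeasureTheory.ae_of_all _ fun x hx => by simpa [Real.norm_eq_abs] using h x hx


set_option maxHeartbeats 1000000 in

/-- For β ∈ (-1,-1/2), ε = 1+β, the piecewise linear cutoff `u` (with piecewise derivative `g`)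
satisfies `∫₀^π (1+β cos 2θ) g² ≤ C√ε` and `∫₀^π (1+β cos 2θ) u² ≥ 1/C` for an absolute
constant C, whence its Rayleigh quotient is at most `C²√(1+β)`. -/
theorem stmt9 :
    ∃ C > 0, ∀ β ∈ Set.Ioo (-1 : ℝ) (-1/2 : ℝ),
      let ε : ℝ := 1 + β
      let u : ℝ → ℝ := fun θ =>
        if θ ≤ Real.sqrt ε then θ / Real.sqrt ε
        else if θ < Real.pi - Real.sqrt ε then 1
        else (Real.pi - θ) / Real.sqrt ε
      let g : ℝ → ℝ := fun θ =>
        if θ ≤ Real.sqrt ε then 1 / Real.sqrt ε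
        else if θ < Real.pi - Real.sqrt ε then 0
        else -(1 / Real.sqrt ε)
      (∫ θ in (0 : ℝ)..Real.pi, (1 + β * Real.cos (2 * θ)) * g θ ^ 2) ≤ C * Real.sqrt ε ∧
      1 / C ≤ (∫ θ in (0 : ℝ)..Real.pi, (1 + β * Real.cos (2 * θ)) * u θ ^ 2) ∧
      (∫ θ in (0 : ℝ)..Real.pi, (1 + β * Real.cos (2 * θ)) * g θ ^ 2) /
        (∫ θ in (0 : ℝ)..Real.pi, (1 + β * Real.cos (2 * θ)) * u θ ^ 2)
        ≤ C ^ 2 * Real.sqrt (1 + β) := by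
  refine ⟨6, by norm_num, ?_⟩
  intro β hβ
  obtain ⟨hβ1, hβ2⟩ := hβ
  dsimp only
  set s := Real.sqrt (1 + β) with hs_def
  have hπ : (3.14 : ℝ) < π := by
    have := Real.pi_gt_d6; linarith
  have hε0 : (0:ℝ) < 1 + β := by linarith
  have hε1 : 1 + β < 1 := by linarith
  have hs0 : 0 < s := Real.sqrt_pos.2 hε0
  have hs1 : s < 1 := by
    have := Real.sqrt_lt_sqrt hε0.le hε1
    rwa [Real.sqrt_one] at this
  have hsq : s ^ 2 = 1 + β := Real.sq_sqrt hε0.le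
  have hsπ : s < π - s := by linarith
  have h1π : (1:ℝ) < π - 1 := by linarith
  -- weight identity and bounds
  have hwid : ∀ θ : ℝ, 1 + β * Real.cos (2 * θ) = (1 + β) - 2 * β * Real.sin θ ^ 2 := by
    intro θ
    rw [Real.cos_two_mul']
    have h := Real.sin_sq_add_cos_sq θ
    linear_combination β * h
  have hw0 : ∀ θ : ℝ, 0 ≤ 1 + β * Real.cos (2 * θ) := by
    intro θ
    rw [hwid θ]
    nlinarith [sq_nonneg (Real.sin θ)]
  have key : ∀ t : ℝ, 0 ≤ t → t ≤ 1 + β → (1 + β) - 2 * β * t ≤ 3 * (1 + β) := by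
    intro t ht0 ht1
    nlinarith [mul_nonneg (by linarith : (0:ℝ) ≤ 2 + 2*β) ht0]
  -- the two integrands
  set fg : ℝ → ℝ := fun θ =>
    (1 + β * Real.cos (2 * θ)) * (if θ ≤ s then 1 / s else if θ < π - s then 0 else -(1 / s)) ^ 2
    with hfg_def
  set fu : ℝ → ℝ := fun θ =>
    (1 + β * Real.cos (2 * θ)) * (if θ ≤ s then θ / s else if θ < π - s then 1 else (π - θ) / s) ^ 2
    with hfu_def
  have hwm : Measurable fun θ : ℝ => 1 + β * Real.cos (2 * θ) := by fun_prop
  have hgm : Measurable fg := by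
    apply hwm.mul
    apply Measurable.pow_const
    exact Measurable.ite (measurableSet_le measurable_id measurable_const) measurable_const
      (Measurable.ite (measurableSet_lt measurable_id measurable_const) measurable_const
        measurable_const)
  have hum : Measurable fu := by
    apply hwm.mul
    apply Measurable.pow_const
    exact Measurable.ite (measurableSet_le measurable_id measurable_const)
      (measurable_id.div_const s)
      (Measurable.ite (measurableSet_lt measurable_id measurable_const) measurable_const
        ((measurable_const.sub measurable_id).div_const s))
  have hwb : ∀ θ : ℝ, |1 + β * Real.cos (2 * θ)| ≤ 2 := by
    intro θ
    rw [abs_of_nonneg (hw0 θ)]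
    nlinarith [Real.neg_one_le_cos (2*θ), Real.cos_le_one (2*θ)]
  have hIg : ∀ a b : ℝ, IntervalIntegrable fg MeasureTheory.volume a b := by
    intro a b
    refine myIntegrable hgm (M := 2 * (1/s)^2) fun x _ => ?_
    rw [hfg_def, abs_mul]
    have h2 : |(if x ≤ s then 1 / s else if x < π - s then 0 else -(1 / s)) ^ 2| ≤ (1/s)^2 := by
      split_ifs with h h'
      · rw [abs_of_nonneg (sq_nonneg _)]
      · simp
        positivity
      · rw [abs_of_nonneg (sq_nonneg _), neg_pow]; simp
    exact mul_le_mul (hwb x) h2 (abs_nonneg _) (by norm_num)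
  have huB : ∀ x ∈ Set.Icc (0:ℝ) π, |fu x| ≤ 2 := by
    intro x hx
    rw [hfu_def, abs_mul]
    have h2 : |(if x ≤ s then x / s else if x < π - s then 1 else (π - x) / s) ^ 2| ≤ 1 := by
      rw [abs_of_nonneg (sq_nonneg _)]
      split_ifs with h h'
      · rw [sq_le_one_iff_abs_le_one, abs_div, abs_of_nonneg hx.1, abs_of_pos hs0, div_le_one hs0]
        exact h
      · norm_num
      · push_neg at h'
        rw [sq_le_one_iff_abs_le_one, abs_div, abs_of_nonneg (by linarith [hx.2] : (0:ℝ) ≤ π - x),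
          abs_of_pos hs0, div_le_one hs0]
        linarith
    calc |1 + β * Real.cos (2 * x)| * |(if x ≤ s then x / s else if x < π - s then 1 else (π - x) / s) ^ 2|
        ≤ 2 * 1 := mul_le_mul (hwb x) h2 (abs_nonneg _) (by norm_num)
      _ = 2 := by norm_num
  have hIu : ∀ a b : ℝ, a ∈ Set.Icc (0:ℝ) π → b ∈ Set.Icc (0:ℝ) π →
      IntervalIntegrable fu MeasureTheory.volume a b := by
    intro a b ha hb
    refine myIntegrable hum (M := 2) fun x hx => ?_
    exact huB x (Set.uIcc_subset_Icc ha hb (Set.uIoc_subset_uIcc hx))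
  -- ===== numerator =====
  have hsplit_g : (∫ θ in (0:ℝ)..π, fg θ)
      = (∫ θ in (0:ℝ)..s, fg θ) + (∫ θ in s..(π-s), fg θ) + (∫ θ in (π-s)..π, fg θ) := by
    rw [integral_add_adjacent_intervals (hIg 0 s) (hIg s (π-s)),
      integral_add_adjacent_intervals (hIg 0 (π-s)) (hIg (π-s) π)]
  have hA1 : (∫ θ in (0:ℝ)..s, fg θ) ≤ 3 * s := by
    have hcg : Set.EqOn fg (fun x => (1 + β * Real.cos (2*x)) * (1/s)^2) (Set.uIcc 0 s) := by
      intro x hx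
      rw [Set.uIcc_of_le hs0.le] at hx
      show (1 + β * Real.cos (2 * x)) * _ ^ 2 = _
      rw [if_pos hx.2]
    rw [integral_congr hcg]
    have hco : Continuous fun x : ℝ => (1 + β * Real.cos (2*x)) * (1/s)^2 := by fun_prop
    calc (∫ x in (0:ℝ)..s, (1 + β * Real.cos (2*x)) * (1/s)^2)
        ≤ ∫ _ in (0:ℝ)..s, (3:ℝ) := by
          refine integral_mono_on hs0.le (hco.intervalIntegrable _ _) intervalIntegrable_const ?_
          intro x hx
          have hsinx : Real.sin x ≤ x := Real.sin_le hx.1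
          have hsin0 : 0 ≤ Real.sin x := Real.sin_nonneg_of_nonneg_of_le_pi hx.1 (by linarith [hx.2])
          have hss : Real.sin x ^ 2 ≤ 1 + β := by nlinarith [hx.2]
          have hwle := key (Real.sin x ^ 2) (sq_nonneg _) hss
          rw [← hwid x] at hwle
          rw [div_pow, one_pow, hsq, mul_one_div, div_le_iff₀ hε0]
          linarith
      _ = 3 * s := by simp [mul_comm]
  have hA2 : (∫ θ in s..(π-s), fg θ) = 0 := by
    have hae : ∀ᵐ x : ℝ, x ≠ π - s := by
      rw [MeasureTheory.ae_iff]
      simp only [ne_eq, not_not, Set.setOf_eq_eq_singleton]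
      exact MeasureTheory.measure_singleton _
    rw [integral_congr_ae (g := fun _ => (0:ℝ)) ?_]
    · simp
    · filter_upwards [hae] with x hxne hxmem
      rw [Set.uIoc_of_le hsπ.le] at hxmem
      show (1 + β * Real.cos (2 * x)) * _ ^ 2 = 0
      rw [if_neg (by linarith [hxmem.1] : ¬ x ≤ s),
        if_pos (lt_of_le_of_ne hxmem.2 hxne)]
      ring
  have hA3 : (∫ θ in (π-s)..π, fg θ) ≤ 3 * s := by
    have hπs : π - s ≤ π := by linarith
    have hcg : Set.EqOn fg (fun x => (1 + β * Real.cos (2*x)) * (1/s)^2) (Set.uIcc (π-s) π) := by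
      intro x hx
      rw [Set.uIcc_of_le hπs] at hx
      show (1 + β * Real.cos (2 * x)) * _ ^ 2 = _
      rw [if_neg (by linarith [hx.1] : ¬ x ≤ s), if_neg (by linarith [hx.1] : ¬ x < π - s),
        neg_pow]
      simp
    rw [integral_congr hcg]
    have hco : Continuous fun x : ℝ => (1 + β * Real.cos (2*x)) * (1/s)^2 := by fun_prop
    calc (∫ x in (π-s)..π, (1 + β * Real.cos (2*x)) * (1/s)^2)
        ≤ ∫ _ in (π-s)..π, (3:ℝ) := by
          refine integral_mono_on hπs (hco.intervalIntegrable _ _) intervalIntegrable_const ?_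
          intro x hx
          have h1 : Real.sin (π - x) ≤ π - x := Real.sin_le (by linarith [hx.2])
          have h0 : 0 ≤ Real.sin (π - x) := Real.sin_nonneg_of_nonneg_of_le_pi
            (by linarith [hx.2]) (by linarith [hx.1, hs0])
          rw [Real.sin_pi_sub] at h1 h0
          have hss : Real.sin x ^ 2 ≤ 1 + β := by nlinarith [hx.1, hx.2]
          have hwle := key (Real.sin x ^ 2) (sq_nonneg _) hss
          rw [← hwid x] at hwle
          rw [div_pow, one_pow, hsq, mul_one_div, div_le_iff₀ hε0]
          linarith
      _ = 3 * s := by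
          rw [integral_const, smul_eq_mul]
          ring
  have hN : (∫ θ in (0:ℝ)..π, fg θ) ≤ 6 * s := by
    rw [hsplit_g]; linarith
  -- ===== denominator =====
  have hmem0 : (0:ℝ) ∈ Set.Icc (0:ℝ) π := by constructor <;> linarith
  have hmem1 : (1:ℝ) ∈ Set.Icc (0:ℝ) π := by constructor <;> linarith
  have hmemπ1 : π - 1 ∈ Set.Icc (0:ℝ) π := by constructor <;> linarith
  have hmemπ : π ∈ Set.Icc (0:ℝ) π := by constructor <;> linarith
  have hsplit_u : (∫ θ in (0:ℝ)..π, fu θ)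
      = (∫ θ in (0:ℝ)..1, fu θ) + (∫ θ in (1:ℝ)..(π-1), fu θ) + (∫ θ in (π-1)..π, fu θ) := by
    rw [integral_add_adjacent_intervals (hIu 0 1 hmem0 hmem1) (hIu 1 (π-1) hmem1 hmemπ1),
      integral_add_adjacent_intervals (hIu 0 (π-1) hmem0 hmemπ1) (hIu (π-1) π hmemπ1 hmemπ)]
  have hB1 : 0 ≤ (∫ θ in (0:ℝ)..1, fu θ) :=
    integral_nonneg (by norm_num) fun x _ => mul_nonneg (hw0 x) (sq_nonneg _)
  have hB3 : 0 ≤ (∫ θ in (π-1)..π, fu θ) :=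
    integral_nonneg (by linarith) fun x _ => mul_nonneg (hw0 x) (sq_nonneg _)
  have hB2 : 1/6 ≤ (∫ θ in (1:ℝ)..(π-1), fu θ) := by
    have hcu : Set.EqOn fu (fun x => 1 + β * Real.cos (2*x)) (Set.uIcc 1 (π-1)) := by
      intro x hx
      rw [Set.uIcc_of_le h1π.le] at hx
      show (1 + β * Real.cos (2 * x)) * _ ^ 2 = _
      rw [if_neg (by linarith [hx.1] : ¬ x ≤ s), if_pos (by linarith [hx.2] : x < π - s)]
      ring
    rw [integral_congr hcu]
    have hco : Continuous fun x : ℝ => 1 + β * Real.cos (2*x) := by fun_prop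
    have hmono : (∫ x in (1:ℝ)..(π-1), Real.sin x ^ 2)
        ≤ ∫ x in (1:ℝ)..(π-1), 1 + β * Real.cos (2*x) := by
      refine integral_mono_on h1π.le ?_ (hco.intervalIntegrable _ _) ?_
      · exact (Real.continuous_sin.pow 2).intervalIntegrable _ _
      · intro x _
        rw [hwid x]
        nlinarith [sq_nonneg (Real.sin x)]
    rw [integral_sin_sq] at hmono
    rw [Real.sin_pi_sub, Real.cos_pi_sub] at hmono
    have hsc : 0 ≤ Real.sin 1 * Real.cos 1 := by
      refine mul_nonneg (Real.sin_nonneg_of_nonneg_of_le_pi (by norm_num) (by linarith)) ?_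
      exact Real.cos_nonneg_of_mem_Icc ⟨by linarith, by linarith⟩
    linarith
  have hD : 1/6 ≤ (∫ θ in (0:ℝ)..π, fu θ) := by
    rw [hsplit_u]; linarith
  refine ⟨hN, hD, ?_⟩
  have hN0 : 0 ≤ (∫ θ in (0:ℝ)..π, fg θ) :=
    integral_nonneg (by linarith) fun x _ => mul_nonneg (hw0 x) (sq_nonneg _)
  have hD0 : 0 < (∫ θ in (0:ℝ)..π, fu θ) := by linarith
  rw [div_le_iff₀ hD0]
  nlinarith [mul_nonneg hs0.le (by linarith : (0:ℝ) ≤ (∫ θ in (0:ℝ)..π, fu θ) - 1/6)]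
end

section
/- For β ∈ (-1, 0) and u ∈ H¹₀((0,π)) with max_{[0,π]} |u| = 1 attained at θ₀ ∈ (0, π/2], we have 1 ≤ (∫₀^{θ₀} (1 + β cos 2θ)|u'|² dθ) · (∫₀^{θ₀} (1 + β cos 2θ)^{-1} dθ), and ∫₀^{θ₀} (1 + β cos 2θ)^{-1} dθ ≤ C (1+β)^{-1/2} for an absolute constant C. Consequently ∫₀^{θ₀} (1 + β cos 2θ)|u'|² dθ ≥ C^{-1} (1+β)^{1/2}. -/
open intervalIntegral

lemma aux_arctan_deriv (a : ℝ) (ha : 0 < a) (θ : ℝ) :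
    HasDerivAt (fun x => Real.pi / (2 * Real.sqrt a) *
      Real.arctan (2 / (Real.pi * Real.sqrt a) * x)) ((a + (2 / Real.pi * θ) ^ 2)⁻¹) θ := by
  have hπ := Real.pi_pos
  have hsa : 0 < Real.sqrt a := Real.sqrt_pos.2 ha
  have hss : Real.sqrt a * Real.sqrt a = a := Real.mul_self_sqrt ha.le
  set c : ℝ := 2 / (Real.pi * Real.sqrt a) with hc_def
  have h1 : HasDerivAt (fun x : ℝ => c * x) c θ := by
    simpa using (hasDerivAt_id θ).const_mul c
  have h2 := (Real.hasDerivAt_arctan (c * θ)).comp θ h1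
  have h3 := h2.const_mul (Real.pi / (2 * Real.sqrt a))
  refine h3.congr_deriv (Eq.symm ?_)
  simp only [hc_def]
  have h4 : Real.sqrt a ^ 2 = a := Real.sq_sqrt ha.le
  field_simp
  ring_nf
  linear_combination (Real.pi ^ 2) * h4

lemma aux_int_bound (a : ℝ) (ha : 0 < a) (θ₀ : ℝ) (h0 : 0 ≤ θ₀) :
    (∫ θ in (0 : ℝ)..θ₀, (a + (2 / Real.pi * θ) ^ 2)⁻¹)
      ≤ Real.pi ^ 2 / 4 * (Real.sqrt a)⁻¹ := by
  have hπ := Real.pi_pos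
  have hsa : 0 < Real.sqrt a := Real.sqrt_pos.2 ha
  have hcomp : Continuous fun θ : ℝ => (a + (2 / Real.pi * θ) ^ 2)⁻¹ := by
    apply Continuous.inv₀ (by fun_prop)
    intro θ; positivity
  rw [integral_eq_sub_of_hasDerivAt (fun x _ => aux_arctan_deriv a ha x)
    (hcomp.intervalIntegrable _ _)]
  simp only [mul_zero, Real.arctan_zero, sub_zero]
  have harct : Real.arctan (2 / (Real.pi * Real.sqrt a) * θ₀) ≤ Real.pi / 2 :=
    (Real.arctan_lt_pi_div_two _).le
  have hco : 0 < Real.pi / (2 * Real.sqrt a) := by positivity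
  calc Real.pi / (2 * Real.sqrt a) * Real.arctan (2 / (Real.pi * Real.sqrt a) * θ₀)
      ≤ Real.pi / (2 * Real.sqrt a) * (Real.pi / 2) := mul_le_mul_of_nonneg_left harct hco.le
    _ = Real.pi ^ 2 / 4 * (Real.sqrt a)⁻¹ := by field_simp; ring

set_option maxHeartbeats 1600000 in
/-- For β ∈ (-1,0) and `u` vanishing at 0 with `max |u| = 1` attained at `θ₀ ∈ (0, π/2]`:
`1 ≤ (∫₀^{θ₀} (1+β cos 2θ)|u'|²)(∫₀^{θ₀} (1+β cos 2θ)⁻¹)`, the second factor is at most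
`C(1+β)^{-1/2}` for an absolute constant `C`, and consequently
`∫₀^{θ₀} (1+β cos 2θ)|u'|² ≥ C⁻¹(1+β)^{1/2}`. -/
theorem stmt10 :
    ∃ C > 0, ∀ β ∈ Set.Ioo (-1 : ℝ) (0 : ℝ), ∀ u : ℝ → ℝ, ContDiff ℝ 1 u →
      u 0 = 0 → ∀ θ₀ ∈ Set.Ioc (0 : ℝ) (Real.pi / 2),
      |u θ₀| = 1 → (∀ θ ∈ Set.Icc (0 : ℝ) Real.pi, |u θ| ≤ 1) →
      (1 ≤ (∫ θ in (0 : ℝ)..θ₀, (1 + β * Real.cos (2 * θ)) * deriv u θ ^ 2) *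
          (∫ θ in (0 : ℝ)..θ₀, (1 + β * Real.cos (2 * θ))⁻¹)) ∧
      (∫ θ in (0 : ℝ)..θ₀, (1 + β * Real.cos (2 * θ))⁻¹) ≤ C * (1 + β) ^ (-(1 : ℝ) / 2) ∧
      C⁻¹ * (1 + β) ^ ((1 : ℝ) / 2)
        ≤ ∫ θ in (0 : ℝ)..θ₀, (1 + β * Real.cos (2 * θ)) * deriv u θ ^ 2 := by
  have hπ := Real.pi_pos
  refine ⟨Real.pi ^ 2, by positivity, ?_⟩
  rintro β ⟨hβ1, hβ0⟩ u hu hu0 θ₀ ⟨hθ₀0, hθ₀π⟩ huθ₀ _hmax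
  set a : ℝ := 1 + β with ha_def
  have ha : 0 < a := by simp only [ha_def]; linarith
  have hsa : 0 < Real.sqrt a := Real.sqrt_pos.2 ha
  have hss : Real.sqrt a * Real.sqrt a = a := Real.mul_self_sqrt ha.le
  set w : ℝ → ℝ := fun θ => 1 + β * Real.cos (2 * θ) with hw_def
  have hwa : ∀ θ, a ≤ w θ := by
    intro θ
    have h1 := Real.cos_le_one (2 * θ)
    have h2 := Real.neg_one_le_cos (2 * θ)
    simp only [hw_def, ha_def]
    nlinarith
  have hw0 : ∀ θ, 0 < w θ := fun θ => lt_of_lt_of_le ha (hwa θ)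
  have hwc : Continuous w := by
    simp only [hw_def]; fun_prop
  have hwic : Continuous fun θ => (w θ)⁻¹ := hwc.inv₀ fun θ => (hw0 θ).ne'
  have hu' : Continuous (deriv u) := hu.continuous_deriv le_rfl
  have i1 : IntervalIntegrable (fun θ => (w θ)⁻¹) MeasureTheory.volume 0 θ₀ :=
    hwic.intervalIntegrable _ _
  have i2 : IntervalIntegrable (deriv u) MeasureTheory.volume 0 θ₀ :=
    hu'.intervalIntegrable _ _
  have i3 : IntervalIntegrable (fun θ => w θ * deriv u θ ^ 2) MeasureTheory.volume 0 θ₀ :=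
    (hwc.mul (hu'.pow 2)).intervalIntegrable _ _
  have hK : ∫ θ in (0 : ℝ)..θ₀, deriv u θ = u θ₀ := by
    rw [integral_deriv_eq_sub (fun x _ => (hu.differentiable one_ne_zero).differentiableAt) i2,
      hu0, sub_zero]
  set I := ∫ θ in (0 : ℝ)..θ₀, w θ * deriv u θ ^ 2 with hI_def
  set J := ∫ θ in (0 : ℝ)..θ₀, (w θ)⁻¹ with hJ_def
  clear_value a w I J
  -- Cauchy–Schwarz
  have hCS : 1 ≤ I * J := by
    have key : ∀ t : ℝ, 0 ≤ J * (t * t) + (-2 * u θ₀) * t + I := by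
      intro t
      have hpt : ∀ θ : ℝ, ((Real.sqrt (w θ))⁻¹ * t - Real.sqrt (w θ) * deriv u θ) ^ 2
          = (w θ)⁻¹ * (t * t) + (-2 * t) * deriv u θ + w θ * deriv u θ ^ 2 := by
        intro θ
        have hs : Real.sqrt (w θ) * Real.sqrt (w θ) = w θ := Real.mul_self_sqrt (hw0 θ).le
        have hsne : Real.sqrt (w θ) ≠ 0 := (Real.sqrt_pos.2 (hw0 θ)).ne'
        rw [← hs]
        field_simp
        simp only [Real.sqrt_sq (Real.sqrt_nonneg _)]
        ring
      have h0 : (0 : ℝ) ≤ ∫ θ in (0 : ℝ)..θ₀,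
          ((Real.sqrt (w θ))⁻¹ * t - Real.sqrt (w θ) * deriv u θ) ^ 2 :=
        integral_nonneg hθ₀0.le fun x _ => sq_nonneg _
      have hexp : (∫ θ in (0 : ℝ)..θ₀,
          ((Real.sqrt (w θ))⁻¹ * t - Real.sqrt (w θ) * deriv u θ) ^ 2)
          = J * (t * t) + (-2 * u θ₀) * t + I := by
        simp_rw [hpt]
        rw [integral_add ((i1.mul_const _).add (i2.const_mul _)) i3,
          integral_add (i1.mul_const _) (i2.const_mul _),
          integral_mul_const, integral_const_mul, hK, ← hI_def, ← hJ_def]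
        ring
      linarith [hexp ▸ h0]
    have hd := discrim_le_zero key
    rw [discrim] at hd
    have hu1 : u θ₀ ^ 2 = 1 := by
      rw [← sq_abs, huθ₀]; norm_num
    nlinarith [hd, hu1]
  have hrwneg : a ^ (-(1 : ℝ) / 2) = (Real.sqrt a)⁻¹ := by
    rw [show (-(1 : ℝ) / 2) = -(1 / 2) by ring, Real.rpow_neg ha.le, ← Real.sqrt_eq_rpow]
  -- Second part
  have hJC : J ≤ Real.pi ^ 2 * a ^ (-(1 : ℝ) / 2) := by
    rw [hrwneg]
    rcases le_or_gt (1 / 2 : ℝ) a with hha | hha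
    · -- easy case: w ≥ a ≥ 1/2
      have hmono : J ≤ ∫ _θ in (0 : ℝ)..θ₀, a⁻¹ := by
        rw [hJ_def]
        apply integral_mono_on hθ₀0.le i1 (intervalIntegrable_const)
        intro x _
        exact inv_anti₀ ha (hwa x)
      rw [integral_const, smul_eq_mul, sub_zero] at hmono
      have h12 : (1 : ℝ) / 2 ≤ Real.sqrt a := by
        rw [show (1 : ℝ) / 2 = Real.sqrt (1 / 4) by
          rw [show (1 : ℝ) / 4 = (1 / 2) ^ 2 by norm_num, Real.sqrt_sq (by norm_num)]]
        exact Real.sqrt_le_sqrt (by linarith)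
      have hpi3 := Real.pi_gt_three
      have : θ₀ * a⁻¹ ≤ Real.pi ^ 2 * (Real.sqrt a)⁻¹ := by
        have hainv : a⁻¹ = (Real.sqrt a)⁻¹ * (Real.sqrt a)⁻¹ := by
          rw [← mul_inv, hss]
        rw [hainv]
        have hinv2 : (Real.sqrt a)⁻¹ ≤ 2 := by
          rw [inv_le_comm₀ hsa (by norm_num)]
          linarith
        have hinvpos : 0 < (Real.sqrt a)⁻¹ := by positivity
        have e1 : θ₀ * (Real.sqrt a)⁻¹ ≤ Real.pi := by nlinarith
        have e2 := mul_le_mul_of_nonneg_right e1 hinvpos.le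
        have e3 : Real.pi * (Real.sqrt a)⁻¹ ≤ Real.pi ^ 2 * (Real.sqrt a)⁻¹ :=
          mul_le_mul_of_nonneg_right (by nlinarith) hinvpos.le
        nlinarith [e2, e3]
      linarith
    · -- hard case: a < 1/2, use arctan
      have hb : (1 : ℝ) ≤ 2 * (1 - a) := by linarith
      have hptw : ∀ θ ∈ Set.Icc (0 : ℝ) θ₀, (w θ)⁻¹ ≤ (a + (2 / Real.pi * θ) ^ 2)⁻¹ := by
        intro θ ⟨hθ0, hθ1⟩
        have hsin : 2 / Real.pi * θ ≤ Real.sin θ :=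
          Real.mul_le_sin hθ0 (le_trans hθ1 hθ₀π)
        have hsin0 : 0 ≤ 2 / Real.pi * θ := by positivity
        have hcos : Real.cos (2 * θ) = 1 - 2 * Real.sin θ ^ 2 := by
          have := Real.sin_sq_add_cos_sq θ
          rw [Real.cos_two_mul]; nlinarith
        have hwge : a + (2 / Real.pi * θ) ^ 2 ≤ w θ := by
          simp only [hw_def, ha_def, hcos]
          nlinarith [sq_nonneg (Real.sin θ), sq_nonneg (2 / Real.pi * θ)]
        have hpos : 0 < a + (2 / Real.pi * θ) ^ 2 := by positivity
        exact inv_anti₀ hpos hwge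
      have hcomp : Continuous fun θ : ℝ => (a + (2 / Real.pi * θ) ^ 2)⁻¹ := by
        apply Continuous.inv₀ (by fun_prop)
        intro θ; positivity
      have hmono : J ≤ ∫ θ in (0 : ℝ)..θ₀, (a + (2 / Real.pi * θ) ^ 2)⁻¹ := by
        rw [hJ_def]
        exact integral_mono_on hθ₀0.le i1 (hcomp.intervalIntegrable _ _) hptw
      have hbd := aux_int_bound a ha θ₀ hθ₀0.le
      have hq : Real.pi ^ 2 / 4 * (Real.sqrt a)⁻¹ ≤ Real.pi ^ 2 * (Real.sqrt a)⁻¹ := by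
        have hinvpos : 0 < (Real.sqrt a)⁻¹ := by positivity
        nlinarith
      linarith
  refine ⟨hCS, hJC, ?_⟩
  -- third part
  have hJpos : 0 < J := by
    rw [hJ_def]
    exact intervalIntegral_pos_of_pos i1 (fun x => inv_pos.2 (hw0 x)) hθ₀0
  have hI0 : 0 < I := by nlinarith
  have hrwpos : a ^ ((1 : ℝ) / 2) = Real.sqrt a := (Real.sqrt_eq_rpow a).symm
  rw [hrwpos]
  rw [hrwneg] at hJC
  have h1 : 1 ≤ I * (Real.pi ^ 2 * (Real.sqrt a)⁻¹) := by
    calc 1 ≤ I * J := hCS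
    _ ≤ I * (Real.pi ^ 2 * (Real.sqrt a)⁻¹) := by
        exact mul_le_mul_of_nonneg_left hJC hI0.le
  have hinv : Real.sqrt a * (Real.sqrt a)⁻¹ = 1 := mul_inv_cancel₀ hsa.ne'
  have hpisq : 0 < Real.pi ^ 2 := by positivity
  rw [inv_mul_le_iff₀ hpisq]
  nlinarith [mul_le_mul_of_nonneg_left h1 hsa.le]
end

section
/- Let n ≥ 3, λ > 0, α = (-(n-1) + √((n-1)² + 4λ))/2, and let L be the operator (Lv)(r) = v''(r) + (n/r)v'(r) - (λ/r²)v(r). Suppose H: (0,1) → ℝ is continuous and writes as H = A' + B where A, B ∈ C¹([0,1)) satisfy |A(r)| ≤ C₀ r^α and |B(r)| ≤ C₀ r^{α-1}. Define w(r) = ∫₀^r s^{-(n+2α)} ∫₀^s τ^{n+α} H(τ) dτ ds and v(r) = r^α w(r). Then Lv = H on (0,1) and |v(r)| ≤ C r^{1+α} for a constant C depending only on n, α, C₀. -/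
open intervalIntegral MeasureTheory Set

lemma aux_integrable {f : ℝ → ℝ} {s M : ℝ} (hs : 0 ≤ s)
    (hf : ContinuousOn f (Set.Ioc 0 s)) (hM : ∀ x ∈ Set.Ioc (0:ℝ) s, |f x| ≤ M) :
    IntervalIntegrable f MeasureTheory.volume 0 s := by
  rw [intervalIntegrable_iff_integrableOn_Ioc_of_le hs]
  refine ⟨hf.aestronglyMeasurable measurableSet_Ioc, ?_⟩
  refine MeasureTheory.HasFiniteIntegral.restrict_of_bounded (C := M) measure_Ioc_lt_top ?_
  exact MeasureTheory.ae_restrict_of_forall_mem measurableSet_Ioc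
    (fun x hx => by simpa using hM x hx)

lemma aux_cont_rpow (c : ℝ) (hc : 0 < c) (S : Set ℝ) :
    ContinuousOn (fun x : ℝ => x ^ c) S :=
  fun x _ => (Real.continuousAt_rpow_const x c (Or.inr hc.le)).continuousWithinAt

/-- Integrability and bound for `G s = ∫₀^s τ^p H τ dτ`, via integration by parts. -/
lemma aux_Gbound (α C₀ : ℝ) (p : ℝ) (hα0 : 0 < α) (hp1 : 1 < p) (hC₀ : 0 < C₀)
    (H A B : ℝ → ℝ) (hH : ContinuousOn H (Set.Ioo 0 1))
    (hA : ContDiffOn ℝ 1 A (Set.Ico 0 1)) (hB : ContDiffOn ℝ 1 B (Set.Ico 0 1))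
    (hAB : ∀ r ∈ Set.Ioo (0 : ℝ) 1, H r = deriv A r + B r)
    (hAbd : ∀ r ∈ Set.Ioo (0 : ℝ) 1, |A r| ≤ C₀ * r ^ α)
    (hBbd : ∀ r ∈ Set.Ioo (0 : ℝ) 1, |B r| ≤ C₀ * r ^ (α - 1))
    (s : ℝ) (hs : s ∈ Set.Ioo (0:ℝ) 1) :
    IntervalIntegrable (fun τ => τ ^ p * H τ) MeasureTheory.volume 0 s ∧
      |∫ τ in (0:ℝ)..s, τ ^ p * H τ| ≤ (2 + p) * C₀ * s ^ (p + α) := by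
  obtain ⟨hs0, hs1⟩ := hs
  have hp0 : 0 < p := lt_trans one_pos hp1
  have hsub : Set.Ioc (0:ℝ) s ⊆ Set.Ioo 0 1 := fun x hx => ⟨hx.1, lt_of_le_of_lt hx.2 hs1⟩
  have hsub' : Set.Icc (0:ℝ) s ⊆ Set.Ico 0 1 := fun x hx => ⟨hx.1, lt_of_le_of_lt hx.2 hs1⟩
  -- continuity and boundedness of deriv A on Ioc 0 s
  have hDcont : ContinuousOn (derivWithin A (Set.Ico 0 1)) (Set.Ico 0 1) :=
    hA.continuousOn_derivWithin (uniqueDiffOn_Ico 0 1) le_rfl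
  have hDeq : ∀ x ∈ Set.Ioo (0:ℝ) 1, derivWithin A (Set.Ico 0 1) x = deriv A x := fun x hx =>
    derivWithin_of_mem_nhds (Filter.mem_of_superset (isOpen_Ioo.mem_nhds hx) Set.Ioo_subset_Ico_self)
  have hAdcont : ContinuousOn (deriv A) (Set.Ioc 0 s) :=
    (hDcont.mono (fun x hx => hsub' ⟨hx.1.le, hx.2⟩)).congr
      (fun x hx => (hDeq x (hsub hx)).symm)
  obtain ⟨M, hM⟩ : ∃ M, ∀ x ∈ Set.Icc (0:ℝ) s, ‖derivWithin A (Set.Ico 0 1) x‖ ≤ M :=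
    (isCompact_Icc).exists_bound_of_continuousOn (hDcont.mono hsub')
  have hMd : ∀ x ∈ Set.Ioc (0:ℝ) s, |deriv A x| ≤ M := fun x hx => by
    rw [← hDeq x (hsub hx)]; exact hM x ⟨hx.1.le, hx.2⟩
  have hAdiff : ∀ x ∈ Set.Ioo (0:ℝ) 1, HasDerivAt A (deriv A x) x := fun x hx => by
    have := (hA.differentiableOn one_ne_zero x (Set.Ioo_subset_Ico_self hx)).differentiableAt
      (Filter.mem_of_superset (isOpen_Ioo.mem_nhds hx) Set.Ioo_subset_Ico_self)
    exact this.hasDerivAt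
  have hAcont : ContinuousOn A (Set.Icc 0 s) := hA.continuousOn.mono hsub'
  -- rpow basics on (0, s]
  have hrp1 : ∀ x ∈ Set.Ioc (0:ℝ) s, x ^ p ≤ 1 := fun x hx =>
    Real.rpow_le_one hx.1.le (le_of_lt (lt_of_le_of_lt hx.2 hs1)) hp0.le
  have hrpm1 : ∀ x ∈ Set.Ioc (0:ℝ) s, x ^ (p-1) ≤ 1 := fun x hx =>
    Real.rpow_le_one hx.1.le (le_of_lt (lt_of_le_of_lt hx.2 hs1)) (by linarith)
  -- F and its derivative
  set F : ℝ → ℝ := fun τ => τ ^ p * A τ with hF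
  set F' : ℝ → ℝ := fun τ => p * τ ^ (p-1) * A τ + τ ^ p * deriv A τ with hF'
  have hFd : ∀ x ∈ Set.Ioo (0:ℝ) s, HasDerivWithinAt F (F' x) (Set.Ioi x) x := by
    intro x hx
    have h1 : HasDerivAt (fun y : ℝ => y ^ p) (p * x ^ (p-1)) x :=
      Real.hasDerivAt_rpow_const (Or.inl (ne_of_gt hx.1))
    exact ((h1.mul (hAdiff x ⟨hx.1, lt_trans hx.2 hs1⟩))).hasDerivWithinAt
  have hFcont : ContinuousOn F (Set.Icc 0 s) :=
    (aux_cont_rpow p hp0 _).mul hAcont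
  have hF'int : IntervalIntegrable F' MeasureTheory.volume 0 s := by
    refine aux_integrable hs0.le ?_ (M := p * C₀ + M) ?_
    · refine ContinuousOn.add (ContinuousOn.mul ?_ (hA.continuousOn.mono (fun x hx => hsub' ⟨hx.1.le, hx.2⟩))) ((aux_cont_rpow p hp0 _).mul hAdcont)
      exact (continuousOn_const.mul (fun x hx => (Real.continuousAt_rpow_const x (p-1) (Or.inl (ne_of_gt hx.1))).continuousWithinAt))
    · intro x hx
      have hx1 : x ∈ Set.Ioo (0:ℝ) 1 := hsub hx
      have hxa : |A x| ≤ C₀ := le_trans (hAbd x hx1) (by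
        have : x ^ α ≤ 1 := Real.rpow_le_one hx.1.le hx1.2.le hα0.le
        nlinarith)
      have h2 : |x ^ p * deriv A x| ≤ M := by
        rw [abs_mul, abs_of_nonneg (Real.rpow_nonneg hx.1.le _)]
        calc x ^ p * |deriv A x| ≤ 1 * M := by
              have := hMd x hx
              have h3 := hrp1 x hx
              have h4 : (0:ℝ) ≤ x ^ p := Real.rpow_nonneg hx.1.le _
              nlinarith [abs_nonneg (deriv A x)]
          _ = M := one_mul M
      have h1 : |p * x ^ (p-1) * A x| ≤ p * C₀ := by
        rw [abs_mul, abs_mul, abs_of_nonneg hp0.le,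
          abs_of_nonneg (Real.rpow_nonneg hx.1.le _)]
        have h3 := hrpm1 x hx
        have h4 : (0:ℝ) ≤ x ^ (p-1) := Real.rpow_nonneg hx.1.le _
        have h5 : x ^ (p-1) * |A x| ≤ 1 * C₀ :=
          mul_le_mul h3 hxa (abs_nonneg _) zero_le_one
        nlinarith [abs_nonneg (A x)]
      calc |F' x| ≤ |p * x ^ (p-1) * A x| + |x ^ p * deriv A x| := abs_add_le _ _
        _ ≤ p * C₀ + M := add_le_add h1 h2
  have hFTC : ∫ τ in (0:ℝ)..s, F' τ = F s - F 0 :=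
    integral_eq_sub_of_hasDeriv_right_of_le hs0.le hFcont hFd hF'int
  have hF0 : F 0 = 0 := by
    simp [hF, Real.zero_rpow (ne_of_gt hp0)]
  -- g₂ part
  set g₂ : ℝ → ℝ := fun τ => τ ^ p * B τ - p * τ ^ (p-1) * A τ with hg₂
  have hpa1 : (0:ℝ) ≤ p + α - 1 := by linarith
  have hg₂bd : ∀ x ∈ Set.Ioc (0:ℝ) s, |g₂ x| ≤ (1 + p) * C₀ * s ^ (p + α - 1) := by
    intro x hx
    have hx1 : x ∈ Set.Ioo (0:ℝ) 1 := hsub hx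
    have hxp : (0:ℝ) ≤ x ^ p := Real.rpow_nonneg hx.1.le _
    have hxpm : (0:ℝ) ≤ x ^ (p-1) := Real.rpow_nonneg hx.1.le _
    have e1 : x ^ p * x ^ (α - 1) = x ^ (p + α - 1) := by
      rw [← Real.rpow_add hx.1]; ring_nf
    have e2 : x ^ (p-1) * x ^ α = x ^ (p + α - 1) := by
      rw [← Real.rpow_add hx.1]; ring_nf
    have hb1 : |x ^ p * B x| ≤ C₀ * x ^ (p+α-1) := by
      rw [abs_mul, abs_of_nonneg hxp]
      calc x^p * |B x| ≤ x^p * (C₀ * x^(α-1)) :=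
            mul_le_mul_of_nonneg_left (hBbd x hx1) hxp
        _ = C₀ * x^(p+α-1) := by rw [← e1]; ring
    have hb2 : |p * x ^ (p-1) * A x| ≤ p * C₀ * x ^ (p+α-1) := by
      rw [abs_mul, abs_mul, abs_of_nonneg hp0.le, abs_of_nonneg hxpm, mul_assoc, mul_assoc]
      refine mul_le_mul_of_nonneg_left ?_ hp0.le
      calc x^(p-1) * |A x| ≤ x^(p-1) * (C₀ * x^α) :=
            mul_le_mul_of_nonneg_left (hAbd x hx1) hxpm
        _ = C₀ * x^(p+α-1) := by rw [← e2]; ring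
    have hmono : x ^ (p+α-1) ≤ s ^ (p+α-1) :=
      Real.rpow_le_rpow hx.1.le hx.2 hpa1
    calc |g₂ x| ≤ |x ^ p * B x| + |p * x ^ (p-1) * A x| := abs_sub _ _
      _ ≤ C₀ * x ^ (p+α-1) + p * C₀ * x ^ (p+α-1) := add_le_add hb1 hb2
      _ = (1 + p) * C₀ * x ^ (p+α-1) := by ring
      _ ≤ (1 + p) * C₀ * s ^ (p+α-1) := by
          refine mul_le_mul_of_nonneg_left hmono (by positivity)
  have hg₂cont : ContinuousOn g₂ (Set.Ioc 0 s) := by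
    refine ContinuousOn.sub ((aux_cont_rpow p hp0 _).mul
      (hB.continuousOn.mono (fun x hx => hsub' ⟨hx.1.le, hx.2⟩))) ?_
    exact (continuousOn_const.mul (fun x hx =>
      (Real.continuousAt_rpow_const x (p-1) (Or.inl (ne_of_gt hx.1))).continuousWithinAt)).mul
      (hA.continuousOn.mono (fun x hx => hsub' ⟨hx.1.le, hx.2⟩))
  have hg₂int : IntervalIntegrable g₂ MeasureTheory.volume 0 s :=
    aux_integrable hs0.le hg₂cont hg₂bd
  have hg₂norm : |∫ τ in (0:ℝ)..s, g₂ τ| ≤ (1 + p) * C₀ * s ^ (p + α - 1) * s := by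
    have := intervalIntegral.norm_integral_le_of_norm_le_const (a := 0) (b := s)
      (C := (1 + p) * C₀ * s ^ (p + α - 1)) (f := g₂) (fun x hx => by
        rw [Set.uIoc_of_le hs0.le] at hx
        simpa using hg₂bd x hx)
    simpa [abs_of_nonneg hs0.le] using this
  -- put together
  have heqon : ∀ x ∈ Set.Ioc (0:ℝ) s, x ^ p * H x = F' x + g₂ x := by
    intro x hx
    rw [hAB x (hsub hx)]; simp only [hF', hg₂]; ring
  have hint : IntervalIntegrable (fun τ => τ ^ p * H τ) MeasureTheory.volume 0 s := by
    rw [intervalIntegrable_iff_integrableOn_Ioc_of_le hs0.le]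
    have h := (hF'int.add hg₂int)
    rw [intervalIntegrable_iff_integrableOn_Ioc_of_le hs0.le] at h
    exact h.congr_fun (fun x hx => (heqon x hx).symm) measurableSet_Ioc
  refine ⟨hint, ?_⟩
  have heq : (∫ τ in (0:ℝ)..s, τ ^ p * H τ) = (∫ τ in (0:ℝ)..s, F' τ) + ∫ τ in (0:ℝ)..s, g₂ τ := by
    rw [← intervalIntegral.integral_add hF'int hg₂int]
    apply intervalIntegral.integral_congr_ae
    filter_upwards with x hx
    rw [Set.uIoc_of_le hs0.le] at hx
    exact heqon x hx
  have hFs : |F s| ≤ C₀ * s ^ (p + α) := by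
    have hsp : (0:ℝ) ≤ s ^ p := Real.rpow_nonneg hs0.le _
    have e3 : s ^ p * s ^ α = s ^ (p + α) := (Real.rpow_add hs0 _ _).symm
    calc |F s| = s ^ p * |A s| := by
          rw [hF]; rw [abs_mul, abs_of_nonneg hsp]
      _ ≤ s ^ p * (C₀ * s ^ α) := mul_le_mul_of_nonneg_left (hAbd s ⟨hs0, hs1⟩) hsp
      _ = C₀ * s ^ (p + α) := by rw [← e3]; ring
  have e4 : s ^ (p + α - 1) * s = s ^ (p + α) := by
    rw [← Real.rpow_add_one (ne_of_gt hs0)]; ring_nf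
  calc |∫ τ in (0:ℝ)..s, τ ^ p * H τ| = |F s - F 0 + ∫ τ in (0:ℝ)..s, g₂ τ| := by
        rw [heq, hFTC]
    _ = |F s + ∫ τ in (0:ℝ)..s, g₂ τ| := by rw [hF0, sub_zero]
    _ ≤ |F s| + |∫ τ in (0:ℝ)..s, g₂ τ| := abs_add_le _ _
    _ ≤ C₀ * s ^ (p + α) + (1 + p) * C₀ * s ^ (p + α - 1) * s := add_le_add hFs hg₂norm
    _ = (2 + p) * C₀ * s ^ (p + α) := by rw [mul_assoc ((1+p)*C₀), e4]; ring

/-- Reduction of order: with `α = (-(n-1)+√((n-1)²+4λ))/2`, if `H = A' + B` on `(0,1)` with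
`|A(r)| ≤ C₀ r^α` and `|B(r)| ≤ C₀ r^{α-1}`, then
`v(r) = r^α ∫₀^r s^{-(n+2α)} ∫₀^s τ^{n+α} H(τ) dτ ds` satisfies
`v'' + (n/r)v' - (λ/r²)v = H` on `(0,1)` and `|v(r)| ≤ C r^{1+α}` with `C = C(n,α,C₀)`. -/
theorem stmt15 (n : ℕ) (hn : 3 ≤ n) (lam : ℝ) (hlam : 0 < lam) (C₀ : ℝ) (hC₀ : 0 < C₀)
    (α : ℝ) (hα : α = (-(n - 1 : ℝ) + Real.sqrt ((n - 1 : ℝ) ^ 2 + 4 * lam)) / 2)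
    (H A B : ℝ → ℝ) (hH : ContinuousOn H (Set.Ioo 0 1))
    (hA : ContDiffOn ℝ 1 A (Set.Ico 0 1)) (hB : ContDiffOn ℝ 1 B (Set.Ico 0 1))
    (hAB : ∀ r ∈ Set.Ioo (0 : ℝ) 1, H r = deriv A r + B r)
    (hAbd : ∀ r ∈ Set.Ioo (0 : ℝ) 1, |A r| ≤ C₀ * r ^ α)
    (hBbd : ∀ r ∈ Set.Ioo (0 : ℝ) 1, |B r| ≤ C₀ * r ^ (α - 1)) :
    let w : ℝ → ℝ := fun r =>
      ∫ s in (0 : ℝ)..r, s ^ (-((n : ℝ) + 2 * α)) * ∫ τ in (0 : ℝ)..s, τ ^ ((n : ℝ) + α) * H τ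
    let v : ℝ → ℝ := fun r => r ^ α * w r
    (∀ r ∈ Set.Ioo (0 : ℝ) 1,
      deriv (deriv v) r + ((n : ℝ) / r) * deriv v r - (lam / r ^ 2) * v r = H r) ∧
    ∃ C > 0, ∀ r ∈ Set.Ioo (0 : ℝ) 1, |v r| ≤ C * r ^ (1 + α) := by
  intro w v
  have hn3 : (3:ℝ) ≤ (n:ℝ) := by exact_mod_cast hn
  have hd0 : (0:ℝ) ≤ ((n:ℝ) - 1)^2 + 4*lam := by nlinarith
  have hsq : Real.sqrt (((n:ℝ) - 1)^2 + 4*lam) ^ 2 = ((n:ℝ) - 1)^2 + 4*lam :=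
    Real.sq_sqrt hd0
  have hα0 : 0 < α := by
    have h1 : ((n:ℝ) - 1) < Real.sqrt (((n:ℝ) - 1)^2 + 4*lam) := by
      rw [show ((n:ℝ) - 1)^2 + 4*lam = (((n:ℝ)-1)^2 + 4*lam) from rfl] at hsq
      nlinarith [Real.sqrt_nonneg (((n:ℝ) - 1)^2 + 4*lam)]
    rw [hα]; linarith
  have hquad : α^2 + ((n:ℝ) - 1)*α = lam := by
    have h2 : 2*α + ((n:ℝ) - 1) = Real.sqrt (((n:ℝ) - 1)^2 + 4*lam) := by
      rw [hα]; ring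
    nlinarith [hsq, h2]
  have hp1 : 1 < (n:ℝ) + α := by linarith
  have hGb := fun s hs => aux_Gbound α C₀ ((n:ℝ)+α) hα0 hp1 hC₀ H A B hH hA hB hAB hAbd hBbd s hs
  set G : ℝ → ℝ := fun s => ∫ τ in (0:ℝ)..s, τ ^ ((n:ℝ)+α) * H τ with hGdef
  have hcontint : ContinuousOn (fun τ : ℝ => τ ^ ((n:ℝ)+α) * H τ) (Set.Ioo 0 1) :=
    (aux_cont_rpow _ (by linarith) _).mul hH
  have hGd : ∀ r ∈ Set.Ioo (0:ℝ) 1, HasDerivAt G (r ^ ((n:ℝ)+α) * H r) r := fun r hr =>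
    intervalIntegral.integral_hasDerivAt_right (hGb r hr).1
      (hcontint.stronglyMeasurableAtFilter isOpen_Ioo r hr)
      (hcontint.continuousAt (isOpen_Ioo.mem_nhds hr))
  set K := (2 + ((n:ℝ)+α)) * C₀ with hK
  have hK0 : 0 < K := by positivity
  have hGbd : ∀ s ∈ Set.Ioo (0:ℝ) 1, |G s| ≤ K * s ^ (((n:ℝ)+α) + α) := fun s hs => (hGb s hs).2
  have hgc : ContinuousOn (fun s : ℝ => s ^ (-((n:ℝ)+2*α)) * G s) (Set.Ioo 0 1) :=
    ContinuousOn.mul (fun x hx =>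
        (Real.continuousAt_rpow_const x _ (Or.inl (ne_of_gt hx.1))).continuousWithinAt)
      (fun r hr => (hGd r hr).continuousAt.continuousWithinAt)
  have hgbd : ∀ x ∈ Set.Ioo (0:ℝ) 1, |x ^ (-((n:ℝ)+2*α)) * G x| ≤ K := by
    intro x hx
    have hxq : (0:ℝ) ≤ x ^ (-((n:ℝ)+2*α)) := Real.rpow_nonneg hx.1.le _
    rw [abs_mul, abs_of_nonneg hxq]
    calc x ^ (-((n:ℝ)+2*α)) * |G x| ≤ x ^ (-((n:ℝ)+2*α)) * (K * x ^ (((n:ℝ)+α)+α)) :=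
          mul_le_mul_of_nonneg_left (hGbd x hx) hxq
      _ = K * (x ^ (-((n:ℝ)+2*α)) * x ^ (((n:ℝ)+α)+α)) := by ring
      _ = K := by
          rw [← Real.rpow_add hx.1, show -((n:ℝ)+2*α) + (((n:ℝ)+α)+α) = 0 by ring,
            Real.rpow_zero, mul_one]
  have hgint : ∀ r ∈ Set.Ioo (0:ℝ) 1,
      IntervalIntegrable (fun s => s ^ (-((n:ℝ)+2*α)) * G s) MeasureTheory.volume 0 r :=
    fun r hr => aux_integrable hr.1.le
      (hgc.mono (fun x hx => ⟨hx.1, lt_of_le_of_lt hx.2 hr.2⟩))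
      (fun x hx => hgbd x ⟨hx.1, lt_of_le_of_lt hx.2 hr.2⟩)
  have hwd : ∀ r ∈ Set.Ioo (0:ℝ) 1, HasDerivAt w (r ^ (-((n:ℝ)+2*α)) * G r) r := fun r hr =>
    intervalIntegral.integral_hasDerivAt_right (hgint r hr)
      (hgc.stronglyMeasurableAtFilter isOpen_Ioo r hr)
      (hgc.continuousAt (isOpen_Ioo.mem_nhds hr))
  constructor
  · intro r hr
    obtain ⟨hr0, hr1⟩ := hr
    set v₁ : ℝ → ℝ := fun x =>
      α * x ^ (α-1) * w x + x ^ α * (x ^ (-((n:ℝ)+2*α)) * G x) with hv₁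
    have hvd : ∀ x ∈ Set.Ioo (0:ℝ) 1, HasDerivAt v (v₁ x) x := by
      intro x hx
      have h1 : HasDerivAt (fun y:ℝ => y ^ α) (α * x ^ (α-1)) x :=
        Real.hasDerivAt_rpow_const (Or.inl (ne_of_gt hx.1))
      exact h1.mul (hwd x hx)
    have h2 : HasDerivAt v₁
        ((α * ((α - 1) * r ^ (α-1-1))) * w r
          + (α * r ^ (α-1)) * (r ^ (-((n:ℝ)+2*α)) * G r)
          + ((α * r ^ (α-1)) * (r ^ (-((n:ℝ)+2*α)) * G r)
            + r ^ α * ((-((n:ℝ)+2*α) * r ^ (-((n:ℝ)+2*α)-1)) * G r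
              + r ^ (-((n:ℝ)+2*α)) * (r ^ ((n:ℝ)+α) * H r)))) r := by
      have ha : HasDerivAt (fun x:ℝ => α * x ^ (α-1)) (α * ((α-1) * r ^ (α-1-1))) r :=
        (Real.hasDerivAt_rpow_const (p := α - 1) (Or.inl (ne_of_gt hr0))).const_mul α
      have hb : HasDerivAt (fun x:ℝ => x ^ (-((n:ℝ)+2*α)))
          (-((n:ℝ)+2*α) * r ^ (-((n:ℝ)+2*α)-1)) r :=
        Real.hasDerivAt_rpow_const (Or.inl (ne_of_gt hr0))
      have hc : HasDerivAt (fun x:ℝ => x ^ α) (α * r ^ (α-1)) r :=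
        Real.hasDerivAt_rpow_const (Or.inl (ne_of_gt hr0))
      exact (ha.mul (hwd r ⟨hr0, hr1⟩)).add (hc.mul (hb.mul (hGd r ⟨hr0, hr1⟩)))
    have hdd : deriv (deriv v) r = deriv v₁ r := by
      apply Filter.EventuallyEq.deriv_eq
      filter_upwards [isOpen_Ioo.mem_nhds (⟨hr0, hr1⟩ : r ∈ Set.Ioo (0:ℝ) 1)] with x hx
      exact (hvd x hx).deriv
    rw [hdd, h2.deriv, (hvd r ⟨hr0, hr1⟩).deriv,
      show v₁ r = α * r ^ (α-1) * w r + r ^ α * (r ^ (-((n:ℝ)+2*α)) * G r) from rfl,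
      show v r = r ^ α * w r from rfl]
    -- algebraic identities
    have hrne : r ≠ 0 := ne_of_gt hr0
    have e1 : r ^ (α-1) = r ^ α / r := by
      rw [Real.rpow_sub hr0, Real.rpow_one]
    have e2 : r ^ (α-1-1) = r ^ α / r^2 := by
      rw [show α-1-1 = α - 2 by ring, Real.rpow_sub hr0,
        show (2:ℝ) = ((2:ℕ):ℝ) by norm_num, Real.rpow_natCast]
    have e3 : r ^ (-((n:ℝ)+2*α)-1) = r ^ (-((n:ℝ)+2*α)) / r := by
      rw [Real.rpow_sub hr0, Real.rpow_one]
    have e4 : r ^ (-((n:ℝ)+2*α)) * (r ^ ((n:ℝ)+α) * H r) = H r / r ^ α := by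
      rw [← mul_assoc, ← Real.rpow_add hr0,
        show -((n:ℝ)+2*α) + ((n:ℝ)+α) = -α by ring, Real.rpow_neg hr0.le]
      ring
    rw [e2, e1, e3, e4]
    have hXne : r ^ α ≠ 0 := ne_of_gt (Real.rpow_pos_of_pos hr0 α)
    field_simp
    ring_nf
    linear_combination (r ^ α * w r) * hquad
  · refine ⟨K, hK0, ?_⟩
    intro r hr
    have hrpα : (0:ℝ) ≤ r ^ α := Real.rpow_nonneg hr.1.le _
    have hw : |w r| ≤ K * r := by
      have h := intervalIntegral.norm_integral_le_of_norm_le_const (a := 0) (b := r)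
        (C := K) (f := fun s => s ^ (-((n:ℝ)+2*α)) * G s) (fun x hx => by
          rw [Set.uIoc_of_le hr.1.le] at hx
          rw [Real.norm_eq_abs]
          exact hgbd x ⟨hx.1, lt_of_le_of_lt hx.2 hr.2⟩)
      simpa only [Real.norm_eq_abs, sub_zero, abs_of_nonneg hr.1.le] using h
    calc |v r| = r ^ α * |w r| := by
          rw [show v r = r ^ α * w r from rfl, abs_mul, abs_of_nonneg hrpα]
      _ ≤ r ^ α * (K * r) := mul_le_mul_of_nonneg_left hw hrpα
      _ = K * r ^ (1+α) := by rw [Real.rpow_add hr.1, Real.rpow_one]; ring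
end
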